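/- Suppose the true model is Ψ(μ₁•, μ₂•; γ•) and agents minimize KL divergence over models Ψ(μ₁, μ₂; γ) with μ₁, μ₂ ∈ ℝ and γ restricted to a compact interval [γ̲, γ̄] not containing γ•. Let γ̃ = γ̄ if γ• > γ̄, and γ̃ = γ̲ if γ• < γ̲. Then the unique minimizers are μ₁*(c) = μ₁•, μ₂*(c) = μ₂• + (γ• − γ̃)(μ₁• − E_{Ψ•}[X₁ | X₁ ≤ c]), and γ*(c) = γ̃. -/

import Mathlib

open MeasureTheory Set

/-- Gaussian density with mean `a` and variance `s2`. -/
noncomputable def gauss (a s2 x : ℝ) : ℝ :=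
  (Real.sqrt (2 * Real.pi * s2))⁻¹ * Real.exp (-(x - a) ^ 2 / (2 * s2))

/-- Mean of a `N(a, s2)` random variable truncated above at `c`, i.e. `E[X | X ≤ c]`. -/
noncomputable def truncMean (a s2 c : ℝ) : ℝ :=
  (∫ x in Iic c, x * gauss a s2 x) / (∫ x in Iic c, gauss a s2 x)

/-- The (simplified) KL objective when the true model is `Ψ(μ1b, μ2b; γb)` and the
subjective model is `Ψ(μ1, μ2; γ)`, with censoring threshold `c`. -/
noncomputable def xiGamma (μ1b μ2b s2 γb c μ1 μ2 γ : ℝ) : ℝ :=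
  (μ1 - μ1b) ^ 2 / 2 +
    ∫ x in Iic c, gauss μ1b s2 x * (μ2 - γ * (x - μ1) - μ2b + γb * (x - μ1b)) ^ 2 / 2

lemma gauss_pos (a s2 x : ℝ) (hs2 : 0 < s2) : 0 < gauss a s2 x := by
  unfold gauss
  have h1 : 0 < Real.sqrt (2 * Real.pi * s2) :=
    Real.sqrt_pos.mpr (by positivity)
  positivity

lemma integrable_pow_gauss (a s2 : ℝ) (hs2 : 0 < s2) (n : ℕ) :
    Integrable (fun x : ℝ => (x - a) ^ n * gauss a s2 x) := by
  have hb : 0 < 1 / (2 * s2) := by positivity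
  have base : Integrable (fun x : ℝ => x ^ n * Real.exp (-(1 / (2 * s2)) * x ^ 2)) := by
    have hn : (-1 : ℝ) < (n : ℝ) :=
      lt_of_lt_of_le (by norm_num) (Nat.cast_nonneg n)
    simpa [Real.rpow_natCast] using integrable_rpow_mul_exp_neg_mul_sq hb hn
  have shifted := base.comp_sub_right a
  have := shifted.const_mul ((Real.sqrt (2 * Real.pi * s2))⁻¹)
  refine this.congr (Filter.Eventually.of_forall fun x => ?_)
  have hexp : Real.exp (-(1 / (2 * s2)) * (x - a) ^ 2) = Real.exp (-(x - a) ^ 2 / (2 * s2)) := by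
    norm_num; ring_nf
  simp only [gauss]
  rw [hexp]
  ring

lemma integrable_quad_gauss (a s2 : ℝ) (hs2 : 0 < s2) (p q r : ℝ) :
    Integrable (fun x : ℝ => (p + q * x + r * x ^ 2) * gauss a s2 x) := by
  have h0 := (integrable_pow_gauss a s2 hs2 0).const_mul (p + q * a + r * a ^ 2)
  have h1 := (integrable_pow_gauss a s2 hs2 1).const_mul (q + 2 * r * a)
  have h2 := (integrable_pow_gauss a s2 hs2 2).const_mul r
  have := (h0.add h1).add h2
  refine this.congr (Filter.Eventually.of_forall fun x => ?_)
  simp only [Pi.add_apply]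
  ring

set_option maxHeartbeats 1000000 in
/-- If `γ` is restricted to a compact interval `[γlo, γhi]` not containing the true
`γb`, then the unique KL minimizers are `μ₁* = μ₁•`,
`μ₂* = μ₂• + (γ• − γ̃)(μ₁• − E[X₁|X₁ ≤ c])` and `γ* = γ̃`, where `γ̃` is the endpoint of
the interval closest to `γ•`. -/
theorem pseudo_true_with_gamma (μ1b μ2b s2 γb γlo γhi c : ℝ) (hs2 : 0 < s2)
    (hle : γlo ≤ γhi) (hout : γb < γlo ∨ γhi < γb) :
    let γt := if γhi < γb then γhi else γlo
    let μ2s := μ2b + (γb - γt) * (μ1b - truncMean μ1b s2 c)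
    (∀ μ1 μ2 γ : ℝ, γ ∈ Icc γlo γhi →
        xiGamma μ1b μ2b s2 γb c μ1b μ2s γt ≤ xiGamma μ1b μ2b s2 γb c μ1 μ2 γ) ∧
    (∀ μ1 μ2 γ : ℝ, γ ∈ Icc γlo γhi →
        (∀ μ1' μ2' γ' : ℝ, γ' ∈ Icc γlo γhi →
            xiGamma μ1b μ2b s2 γb c μ1 μ2 γ ≤ xiGamma μ1b μ2b s2 γb c μ1' μ2' γ') →
        μ1 = μ1b ∧ μ2 = μ2s ∧ γ = γt) := by
  intro γt μ2s
  set g : ℝ → ℝ := gauss μ1b s2 with hgdef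
  have hgpos : ∀ x, 0 < g x := fun x => gauss_pos _ _ _ hs2
  -- basic integrabilities
  have hg : Integrable g := by
    have := integrable_quad_gauss μ1b s2 hs2 1 0 0
    refine this.congr (Filter.Eventually.of_forall fun x => by simp [hgdef])
  have hxg : Integrable (fun x => x * g x) := by
    have := integrable_quad_gauss μ1b s2 hs2 0 1 0
    refine this.congr (Filter.Eventually.of_forall fun x => by ring)
  set M0 : ℝ := ∫ x in Iic c, g x with hM0def
  set M1 : ℝ := ∫ x in Iic c, x * g x with hM1def
  set m : ℝ := truncMean μ1b s2 c with hmdef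
  have hm : m = M1 / M0 := rfl
  have hxmg : Integrable (fun x => (x - m) * g x) := by
    have := integrable_quad_gauss μ1b s2 hs2 (-m) 1 0
    refine this.congr (Filter.Eventually.of_forall fun x => by ring)
  have hxm2g : Integrable (fun x => (x - m) ^ 2 * g x) := by
    have := integrable_quad_gauss μ1b s2 hs2 (m ^ 2) (-2 * m) 1
    refine this.congr (Filter.Eventually.of_forall fun x => by ring)
  -- positivity of the truncated mass
  have hM0 : 0 < M0 := by
    rw [hM0def, setIntegral_pos_iff_support_of_nonneg_ae
      (Filter.Eventually.of_forall fun x => (hgpos x).le) hg.integrableOn]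
    refine lt_of_lt_of_le ?_ (measure_mono (fun x hx => ⟨(hgpos x).ne', hx⟩))
    simp [Real.volume_Iic]
  set Q : ℝ := ∫ x in Iic c, (x - m) ^ 2 * g x with hQdef
  -- positivity of the truncated second central moment
  have hQ : 0 < Q := by
    rw [hQdef, setIntegral_pos_iff_support_of_nonneg_ae
      (Filter.Eventually.of_forall fun x => mul_nonneg (sq_nonneg _) (hgpos x).le) hxm2g.integrableOn]
    refine lt_of_lt_of_le ?_ (measure_mono (s := Iic c \ {m}) (fun x hx => ?_))
    · rw [measure_diff_null (measure_singleton m)]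
      simp [Real.volume_Iic]
    · refine ⟨?_, hx.1⟩
      have hxm : x - m ≠ 0 := sub_ne_zero.mpr (by simpa using hx.2)
      exact mul_ne_zero (pow_ne_zero _ hxm) (hgpos x).ne'
  -- the first central moment vanishes
  have hzero : ∫ x in Iic c, (x - m) * g x = 0 := by
    have heq : (fun x => (x - m) * g x) = fun x => x * g x - m * g x := by
      funext x; ring
    rw [heq, integral_sub hxg.integrableOn ((hg.const_mul m).integrableOn),
      integral_const_mul]
    rw [← hM1def, ← hM0def, hm]
    field_simp
    ring
  -- decomposition of the quadratic integral
  have hdecomp : ∀ A B : ℝ, (∫ x in Iic c, g x * (A + B * x) ^ 2 / 2)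
      = (A + B * m) ^ 2 * M0 / 2 + B ^ 2 * Q / 2 := by
    intro A B
    have heq : (fun x => g x * (A + B * x) ^ 2 / 2)
        = fun x => ((A + B * m) ^ 2 / 2) * g x
          + (((A + B * m) * B) * ((x - m) * g x) + (B ^ 2 / 2) * ((x - m) ^ 2 * g x)) := by
      funext x; ring
    have hsum : Integrable (fun x => ((A + B * m) * B) * ((x - m) * g x)
        + (B ^ 2 / 2) * ((x - m) ^ 2 * g x)) :=
      (hxmg.const_mul _).add (hxm2g.const_mul _)
    rw [heq, integral_add ((hg.const_mul _).integrableOn) hsum.integrableOn,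
      integral_add ((hxmg.const_mul _).integrableOn) ((hxm2g.const_mul _).integrableOn),
      integral_const_mul, integral_const_mul, integral_const_mul, hzero]
    rw [← hM0def, ← hQdef]
    ring
  -- closed form of the objective
  have hxi : ∀ μ1 μ2 γ : ℝ, xiGamma μ1b μ2b s2 γb c μ1 μ2 γ
      = (μ1 - μ1b) ^ 2 / 2
        + ((μ2 - μ2b + γ * μ1 - γb * μ1b) + (γb - γ) * m) ^ 2 * M0 / 2
        + (γb - γ) ^ 2 * Q / 2 := by
    intro μ1 μ2 γ
    unfold xiGamma
    have heq : (fun x => gauss μ1b s2 x * (μ2 - γ * (x - μ1) - μ2b + γb * (x - μ1b)) ^ 2 / 2)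
        = fun x => g x * ((μ2 - μ2b + γ * μ1 - γb * μ1b) + (γb - γ) * x) ^ 2 / 2 := by
      funext x; rw [hgdef]; ring
    rw [heq, hdecomp]
    ring
  -- the claimed optimum value
  have hγtmem : γt ∈ Icc γlo γhi := by
    by_cases h : γhi < γb
    · simp only [γt, if_pos h]; exact ⟨hle, le_refl _⟩
    · simp only [γt, if_neg h]; exact ⟨le_refl _, hle⟩
  have hopt : xiGamma μ1b μ2b s2 γb c μ1b μ2s γt = (γb - γt) ^ 2 * Q / 2 := by
    rw [hxi]
    have h1 : ((μ2s - μ2b + γt * μ1b - γb * μ1b) + (γb - γt) * m) = 0 := by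
      simp only [μ2s]; ring
    rw [h1]
    ring
  -- minimality of γt for the squared distance, over the interval
  have hγsq : ∀ γ ∈ Icc γlo γhi, (γb - γt) ^ 2 ≤ (γb - γ) ^ 2 := by
    intro γ hγ
    rcases hout with h | h
    · have hne : ¬ γhi < γb := not_lt.mpr (le_of_lt (lt_of_lt_of_le h hle))
      simp only [γt, if_neg hne]
      nlinarith [hγ.1, hγ.2]
    · simp only [γt, if_pos h]
      nlinarith [hγ.1, hγ.2]
  constructor
  · intro μ1 μ2 γ hγ
    rw [hopt, hxi]
    have := hγsq γ hγ
    nlinarith [sq_nonneg (μ1 - μ1b), sq_nonneg ((μ2 - μ2b + γ * μ1 - γb * μ1b) + (γb - γ) * m)]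
  · intro μ1 μ2 γ hγ hmin
    have hle' := hmin μ1b μ2s γt hγtmem
    rw [hopt] at hle'
    rw [hxi] at hle'
    have hsq := hγsq γ hγ
    have hA : ((μ2 - μ2b + γ * μ1 - γb * μ1b) + (γb - γ) * m) ^ 2 = 0 := by
      nlinarith [sq_nonneg (μ1 - μ1b),
        sq_nonneg ((μ2 - μ2b + γ * μ1 - γb * μ1b) + (γb - γ) * m)]
    have hμ1 : μ1 = μ1b := by
      have : (μ1 - μ1b) ^ 2 = 0 := by
        nlinarith [sq_nonneg ((μ2 - μ2b + γ * μ1 - γb * μ1b) + (γb - γ) * m)]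
      have := pow_eq_zero_iff (n := 2) (by norm_num) |>.mp this
      linarith [sub_eq_zero.mp this]
    have hγeq : γ = γt := by
      have hsq' : (γb - γ) ^ 2 ≤ (γb - γt) ^ 2 := by
        nlinarith [sq_nonneg (μ1 - μ1b),
          sq_nonneg ((μ2 - μ2b + γ * μ1 - γb * μ1b) + (γb - γ) * m)]
      rcases hout with h | h
      · have hne : ¬ γhi < γb := not_lt.mpr (le_of_lt (lt_of_lt_of_le h hle))
        simp only [γt, if_neg hne] at hsq' ⊢
        have : γ ≤ γlo := by nlinarith [hγ.1, hγ.2]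
        linarith [hγ.1]
      · simp only [γt, if_pos h] at hsq' ⊢
        have : γhi ≤ γ := by nlinarith [hγ.1, hγ.2]
        linarith [hγ.2]
    have hA0 : (μ2 - μ2b + γ * μ1 - γb * μ1b) + (γb - γ) * m = 0 :=
      pow_eq_zero_iff (n := 2) (by norm_num) |>.mp hA
    refine ⟨hμ1, ?_, hγeq⟩
    rw [hμ1, hγeq] at hA0
    simp only [μ2s]
    linear_combination hA0
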